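/- Let A and B be disjoint finite sets with |A| = n ≥ 1, |B| = m ≥ 1, m ≤ n ≤ 2^{2^q + r}, let p, q, r ∈ ℕ, and let (h(s))_{s∈A∪B} be independent uniform [0,1] random variables. For a set S and bucket index i ∈ {0,…,2^p−1}, say bucket i of S is occupied if some s ∈ S has i·2^{−p} < h(s) < (i+1)·2^{−p}, and in that case let f(S)_i = ĥ_{q,r}( min{ h(s)·2^p − i : s ∈ S, i·2^{−p} < h(s) < (i+1)·2^{−p} } ). Let Z_i be the indicator that bucket i is occupied for both A and B and f(A)_i = f(B)_i. Then for every i, E[Z_i] ≤ 5/2^r + n/2^{p + 2^q + r}. -/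

import Mathlib

open MeasureTheory ProbabilityTheory

/-- `ρ_q(x) = min(⌊−log₂ x⌋ + 1, 2^q)`, the truncated position of the leading 1 bit. -/
noncomputable def rhoHMH (q : ℕ) (x : ℝ) : ℤ :=
  min (⌊-Real.logb 2 x⌋ + 1) (2 ^ q)

/-- `σ_r(x) = ⌊x·2^r⌋`, the next `r` bits. -/
noncomputable def sigmaHMH (r : ℕ) (x : ℝ) : ℤ :=
  ⌊x * 2 ^ r⌋

/-- The HyperMinHash bucket encoding `ĥ_{q,r}(x) = (ρ_q(x), σ_r(x·2^{ρ_q(x)} − 1))`. -/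
noncomputable def hatHMH (q r : ℕ) (x : ℝ) : ℤ × ℤ :=
  (rhoHMH q x, sigmaHMH r (x * (2 : ℝ) ^ rhoHMH q x - 1))

/-- Bucket `i` of the set `S` is occupied: some `s ∈ S` has `i·2^{−p} < h(s) < (i+1)·2^{−p}`. -/
def bucketOccupied {ι Ω : Type*} (h : ι → Ω → ℝ) (p : ℕ) (S : Finset ι) (i : ℕ) (ω : Ω) :
    Prop :=
  ∃ s ∈ S, (i : ℝ) / 2 ^ p < h s ω ∧ h s ω < ((i : ℝ) + 1) / 2 ^ p

/-- The rescaled minimum hash `min{h(s)·2^p − i : s ∈ S, i·2^{−p} < h(s) < (i+1)·2^{−p}}`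
of bucket `i` of the set `S`. -/
noncomputable def bucketMin {ι Ω : Type*} (h : ι → Ω → ℝ) (p : ℕ) (S : Finset ι) (i : ℕ)
    (ω : Ω) : ℝ :=
  sInf {x : ℝ | ∃ s ∈ S, ((i : ℝ) / 2 ^ p < h s ω ∧ h s ω < ((i : ℝ) + 1) / 2 ^ p)
    ∧ x = h s ω * 2 ^ p - i}

/-! ### Auxiliary numeric lemmas -/

lemma HMH.bern2 (n : ℕ) : ∀ s : ℝ, 0 ≤ s →
    1 + n*s + n*(n-1)/2*s^2 ≤ (1+s)^n := by
  induction n with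
  | zero => intro s hs; simp
  | succ n ih =>
    intro s hs
    have h := ih s hs
    have h1 : (1+s)^(n+1) = (1+s)^n * (1+s) := by ring
    have h2 : (1 + n*s + n*(n-1)/2*s^2) * (1+s) ≤ (1+s)^n * (1+s) := by
      apply mul_le_mul_of_nonneg_right h (by linarith)
    rw [h1]
    refine le_trans ?_ h2
    have hn : (0:ℝ) ≤ (n:ℝ)*((n:ℝ)-1) := by
      rcases Nat.eq_zero_or_pos n with h0|h0
      · simp [h0]
      · have h1' : (1:ℝ) ≤ (n:ℝ) := by exact_mod_cast h0
        nlinarith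
    push_cast
    nlinarith [mul_nonneg hn (mul_nonneg (mul_nonneg hs hs) hs)]

lemma HMH.one_sub_pow_le (n : ℕ) (s : ℝ) (hs0 : 0 ≤ s) (hs1 : s ≤ 1) :
    (1-s)^n ≤ 4/((n*s+2)^2) := by
  have hd : (0:ℝ) < ((n:ℝ)*s+2)^2 := by positivity
  match n with
  | 0 => norm_num
  | 1 =>
    rw [le_div_iff₀ hd]
    push_cast
    nlinarith [mul_nonneg hs0 hs0, mul_nonneg (mul_nonneg hs0 hs0) hs0]
  | (n+2) =>
    have hb := HMH.bern2 (n+2) s hs0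
    have hpos : (0:ℝ) < (1+s)^(n+2) := by positivity
    have key : (1-s)^(n+2) * (1+s)^(n+2) ≤ 1 := by
      rw [← mul_pow]
      have h3 : (1-s)*(1+s) = 1 - s^2 := by ring
      rw [h3]
      apply pow_le_one₀ (by nlinarith [sq_nonneg s]) (by nlinarith [sq_nonneg s])
    have h1 : (1-s)^(n+2) ≤ 1/(1+s)^(n+2) := by
      rw [le_div_iff₀ hpos]; exact key
    refine h1.trans ?_
    rw [div_le_div_iff₀ hpos hd]
    have hc : ((n+2:ℕ):ℝ) = (n:ℝ)+2 := by push_cast; ring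
    rw [hc] at hb ⊢
    nlinarith [mul_nonneg (mul_nonneg (Nat.cast_nonneg (α := ℝ) n) hs0) hs0, sq_nonneg ((n:ℝ)*s)]

noncomputable def psiHMH (x : ℝ) : ℝ := x * min x (4/((x+2)^2))

lemma HMH.psi_nonneg {x : ℝ} (hx : 0 ≤ x) : 0 ≤ psiHMH x := by
  have : 0 ≤ min x (4/((x+2)^2)) := le_min hx (by positivity)
  exact mul_nonneg hx this

lemma HMH.psi_le_sq {x : ℝ} (hx : 0 ≤ x) : psiHMH x ≤ x^2 := by
  have : min x (4/((x+2)^2)) ≤ x := min_le_left _ _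
  calc psiHMH x ≤ x * x := mul_le_mul_of_nonneg_left this hx
  _ = x^2 := by ring

lemma HMH.psi_le_g {x : ℝ} (hx : 0 ≤ x) : psiHMH x ≤ 4*x/((x+2)^2) := by
  have : min x (4/((x+2)^2)) ≤ 4/((x+2)^2) := min_le_right _ _
  calc psiHMH x ≤ x * (4/((x+2)^2)) := mul_le_mul_of_nonneg_left this hx
  _ = 4*x/((x+2)^2) := by ring

lemma HMH.psiSum (K : ℕ) : ∀ a : ℝ, 0 ≤ a →
    ∑ k ∈ Finset.range K, psiHMH (a/2^(k+1)) ≤ min (a^2/3) (5 - 16/(a+4)) := by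
  induction K with
  | zero =>
    intro a ha
    simp only [Finset.range_zero, Finset.sum_empty]
    apply le_min
    · positivity
    · have h4 : (0:ℝ) < a + 4 := by linarith
      have : 16/(a+4) ≤ 4 := by rw [div_le_iff₀ h4]; linarith
      linarith
  | succ K ih =>
    intro a ha
    rw [Finset.sum_range_succ']
    have ha2 : (0:ℝ) ≤ a/2 := by linarith
    have step : ∀ k, a/2^(k+1+1) = (a/2)/2^(k+1) := by
      intro k; rw [pow_succ']; ring
    simp only [step]
    have hih := ih (a/2) ha2
    set x := a/2 with hx
    have hxx : a = 2*x := by rw [hx]; ring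
    have hd1 : (0:ℝ) < x + 2 := by linarith
    have hd2 : (0:ℝ) < x + 4 := by linarith
    have hd3 : (0:ℝ) < 2*x + 4 := by linarith
    have hpsi1 : psiHMH (a/2^(0+1)) = psiHMH x := by rw [hx]; norm_num
    rw [hpsi1]
    apply le_min
    · have h1 : psiHMH x ≤ x^2 := HMH.psi_le_sq ha2
      have h2 : ∑ k ∈ Finset.range K, psiHMH (x/2^(k+1)) ≤ x^2/3 :=
        hih.trans (min_le_left _ _)
      rw [hxx]; nlinarith
    · have h1 : psiHMH x ≤ 4*x/((x+2)^2) := HMH.psi_le_g ha2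
      have h2 : ∑ k ∈ Finset.range K, psiHMH (x/2^(k+1)) ≤ 5 - 16/(x+4) :=
        hih.trans (min_le_right _ _)
      have key : 4*x/((x+2)^2) ≤ 16/(x+4) - 16/(2*x+4) := by
        rw [div_sub_div _ _ (ne_of_gt hd2) (ne_of_gt hd3),
          div_le_div_iff₀ (by positivity) (by positivity)]
        nlinarith [mul_nonneg ha2 ha2, mul_nonneg (mul_nonneg ha2 ha2) ha2]
      rw [hxx]
      linarith

/-! ### Facts about the encoding -/

lemma HMH.hat_facts (q r : ℕ) {x : ℝ} (hx0 : 0 < x) (hx1 : x < 1) {k j : ℤ}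
    (hkj : hatHMH q r x = (k, j)) :
    1 ≤ k ∧ k ≤ 2^q ∧ -(2^r:ℤ) ≤ j ∧ j ≤ 2^r ∧
    1 + (j:ℝ)/2^r ≤ x * (2:ℝ)^k ∧ x * (2:ℝ)^k < 1 + ((j:ℝ)+1)/2^r ∧
    x * (2:ℝ)^k ≤ 2 ∧ (k < 2^q → 1 < x * (2:ℝ)^k) := by
  rw [hatHMH, Prod.mk.injEq] at hkj
  obtain ⟨hk, hj⟩ := hkj
  rw [rhoHMH] at hk
  have h2q : (1:ℤ) ≤ 2^q := (by positivity : (0:ℤ) < 2^q)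
  have hflnn : 0 ≤ ⌊-Real.logb 2 x⌋ :=
    Int.floor_nonneg.mpr (neg_nonneg.mpr (Real.logb_nonpos one_lt_two hx0.le hx1.le))
  have hk1 : 1 ≤ k := by rw [← hk]; exact le_min (by omega) (by omega)
  have hk2 : k ≤ 2^q := by rw [← hk]; exact min_le_right _ _
  have hkle : k ≤ ⌊-Real.logb 2 x⌋ + 1 := by rw [← hk]; exact min_le_left _ _
  have hlogb : (k:ℝ) - 1 ≤ -Real.logb 2 x := by
    have h1 : ((k - 1 : ℤ):ℝ) ≤ (⌊-Real.logb 2 x⌋ : ℝ) := by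
      exact_mod_cast (by omega : k - 1 ≤ ⌊-Real.logb 2 x⌋)
    calc (k:ℝ) - 1 = ((k-1:ℤ):ℝ) := by push_cast; ring
    _ ≤ _ := h1
    _ ≤ -Real.logb 2 x := Int.floor_le _
  have hxle : x ≤ (2:ℝ)^(1-k) := by
    have h1 : Real.logb 2 x ≤ ((1 - k : ℤ):ℝ) := by push_cast; linarith
    have h2 := (Real.logb_le_iff_le_rpow one_lt_two hx0).mp h1
    rwa [Real.rpow_intCast] at h2
  have h2kpos : (0:ℝ) < (2:ℝ)^k := zpow_pos two_pos k
  have hxk2 : x * (2:ℝ)^k ≤ 2 := by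
    calc x * (2:ℝ)^k ≤ (2:ℝ)^(1-k) * (2:ℝ)^k := by
          exact mul_le_mul_of_nonneg_right hxle h2kpos.le
    _ = 2 := by rw [← zpow_add₀ (two_ne_zero) (1-k) k]; norm_num
  have hxk0 : (0:ℝ) < x * (2:ℝ)^k := mul_pos hx0 h2kpos
  rw [sigmaHMH] at hj
  rw [show rhoHMH q x = k from by rw [rhoHMH]; exact hk] at hj
  have h2r : (0:ℝ) < (2:ℝ)^r := by positivity
  have hju : ((j:ℝ)) ≤ (x * 2^k - 1) * 2^r := by rw [← hj]; exact Int.floor_le _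
  have hjl : (x * 2^k - 1) * 2^r < (j:ℝ) + 1 := by rw [← hj]; exact Int.lt_floor_add_one _
  have hj2 : j ≤ 2^r := by
    rw [← hj]
    have : (x * 2^k - 1) * 2^r ≤ ((2^r : ℤ):ℝ) := by push_cast; nlinarith
    calc ⌊(x * 2^k - 1) * 2^r⌋ ≤ ⌊((2^r : ℤ):ℝ)⌋ := Int.floor_le_floor this
    _ = 2^r := Int.floor_intCast _
  have hj1 : -(2^r:ℤ) ≤ j := by
    rw [← hj]
    apply Int.le_floor.mpr
    push_cast
    nlinarith
  refine ⟨hk1, hk2, hj1, hj2, ?_, ?_, hxk2, ?_⟩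
  · have h1 : (j:ℝ)/2^r ≤ x * 2^k - 1 := by
      rw [div_le_iff₀ h2r]; linarith
    linarith
  · have h1 : (x * 2^k - 1) < ((j:ℝ)+1)/2^r := by
      rw [lt_div_iff₀ h2r]; linarith
    linarith
  · intro hklt
    have hmin : ⌊-Real.logb 2 x⌋ + 1 = k := by omega
    have h1 : -Real.logb 2 x < k := by
      calc -Real.logb 2 x < ⌊-Real.logb 2 x⌋ + 1 := Int.lt_floor_add_one _
      _ = (k:ℝ) := by exact_mod_cast hmin
    have h2 : ((-k : ℤ):ℝ) < Real.logb 2 x := by push_cast; linarith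
    have h3 := (Real.lt_logb_iff_rpow_lt one_lt_two hx0).mp h2
    rw [Real.rpow_intCast] at h3
    have h4 : (2:ℝ)^(-k) * (2:ℝ)^k = 1 := by
      rw [← zpow_add₀ (two_ne_zero : (2:ℝ) ≠ 0)]; norm_num
    calc (1:ℝ) = (2:ℝ)^(-k) * (2:ℝ)^k := h4.symm
    _ < x * (2:ℝ)^k := by exact mul_lt_mul_of_pos_right h3 h2kpos

lemma HMH.measurable_rho (q : ℕ) : Measurable (rhoHMH q) := by
  unfold rhoHMH
  apply Measurable.min ?_ measurable_const
  exact (Measurable.floor ((Real.measurable_log.comp measurable_id).div_const _).neg).add_const 1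

lemma HMH.measurable_hat (q r : ℕ) : Measurable (hatHMH q r) := by
  unfold hatHMH
  have h1 := HMH.measurable_rho q
  have h2 : Measurable fun x : ℝ => (2:ℝ)^(rhoHMH q x) :=
    (measurable_from_top (f := fun k : ℤ => (2:ℝ)^k)).comp h1
  apply Measurable.prod h1
  unfold sigmaHMH
  exact Measurable.floor (((measurable_id.mul h2).sub_const 1).mul_const _)

/-! ### Facts about bucketMin -/

lemma HMH.bucketMin_attained {ι Ω : Type*} (h : ι → Ω → ℝ) (p : ℕ) (S : Finset ι) (i : ℕ)
    (ω : Ω) (hocc : bucketOccupied h p S i ω) :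
    ∃ s ∈ S, ((i : ℝ) / 2 ^ p < h s ω ∧ h s ω < ((i : ℝ) + 1) / 2 ^ p) ∧
      bucketMin h p S i ω = h s ω * 2 ^ p - i ∧
      ∀ s' ∈ S, ((i : ℝ) / 2 ^ p < h s' ω ∧ h s' ω < ((i : ℝ) + 1) / 2 ^ p) →
        bucketMin h p S i ω ≤ h s' ω * 2 ^ p - i := by
  classical
  obtain ⟨s₀, hs₀, hc₀⟩ := hocc
  have hsub : {x : ℝ | ∃ s ∈ S, ((i : ℝ) / 2 ^ p < h s ω ∧ h s ω < ((i : ℝ) + 1) / 2 ^ p)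
      ∧ x = h s ω * 2 ^ p - i} ⊆
      ↑((S.filter (fun s => (i:ℝ)/2^p < h s ω ∧ h s ω < ((i:ℝ)+1)/2^p)).image
        (fun s => h s ω * 2^p - i)) := by
    rintro x ⟨s, hs, hc, hx⟩
    simp only [Finset.coe_image, Set.mem_image, Finset.mem_coe, Finset.mem_filter]
    exact ⟨s, ⟨hs, hc⟩, hx.symm⟩
  have hfin : {x : ℝ | ∃ s ∈ S, ((i : ℝ) / 2 ^ p < h s ω ∧ h s ω < ((i : ℝ) + 1) / 2 ^ p)
      ∧ x = h s ω * 2 ^ p - i}.Finite := Set.Finite.subset (Finset.finite_toSet _) hsub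
  have hne : {x : ℝ | ∃ s ∈ S, ((i : ℝ) / 2 ^ p < h s ω ∧ h s ω < ((i : ℝ) + 1) / 2 ^ p)
      ∧ x = h s ω * 2 ^ p - i}.Nonempty := ⟨h s₀ ω * 2^p - i, s₀, hs₀, hc₀, rfl⟩
  have hmem := hne.csInf_mem hfin
  obtain ⟨s, hs, hc, hx⟩ := hmem
  refine ⟨s, hs, hc, hx, ?_⟩
  intro s' hs' hc'
  exact csInf_le hfin.bddBelow ⟨s', hs', hc', rfl⟩

lemma HMH.bucketMin_mem_Ioo {ι Ω : Type*} (h : ι → Ω → ℝ) (p : ℕ) (S : Finset ι) (i : ℕ)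
    (ω : Ω) (hocc : bucketOccupied h p S i ω) :
    bucketMin h p S i ω ∈ Set.Ioo (0:ℝ) 1 := by
  obtain ⟨s, _, ⟨hc1, hc2⟩, heq, _⟩ := HMH.bucketMin_attained h p S i ω hocc
  have h2p : (0:ℝ) < 2^p := by positivity
  rw [heq]
  constructor
  · have := (div_lt_iff₀ h2p).mp hc1
    linarith
  · have := (lt_div_iff₀ h2p).mp hc2
    linarith

/-! ### The per-cell events -/

/-- The event that bucket `i` of `A` is occupied and the HyperMinHash value is `(k, j)`. -/
def FsetHMH {ι Ω : Type*} (h : ι → Ω → ℝ) (p q r : ℕ) (A : Finset ι) (i : ℕ)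
    (k : ℕ) (j : ℤ) : Set Ω :=
  {ω | bucketOccupied h p A i ω ∧ hatHMH q r (bucketMin h p A i ω) = ((k:ℤ), j)}

/-- The event that some hash of `B` lands in the (rescaled) cell `(k, j)` of bucket `i`. -/
def GsetHMH {ι Ω : Type*} (h : ι → Ω → ℝ) (p r : ℕ) (B : Finset ι) (i : ℕ)
    (k : ℕ) (j : ℤ) : Set Ω :=
  ⋃ s ∈ B, (h s) ⁻¹' (Set.Ico (((i:ℝ) + (1 + (j:ℝ)/2^r)/2^k)/2^p)
    (((i:ℝ) + (1 + ((j:ℝ)+1)/2^r)/2^k)/2^p))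

lemma HMH.mem_Gset {ι Ω : Type*} (h : ι → Ω → ℝ) (p q r : ℕ) (B : Finset ι) (i : ℕ)
    (k : ℕ) (j : ℤ) (ω : Ω) (hocc : bucketOccupied h p B i ω)
    (hhat : hatHMH q r (bucketMin h p B i ω) = (((k:ℕ):ℤ), j)) :
    ω ∈ GsetHMH h p r B i k j := by
  obtain ⟨hY0, hY1⟩ := HMH.bucketMin_mem_Ioo h p B i ω hocc
  obtain ⟨s, hs, hc, heq, _⟩ := HMH.bucketMin_attained h p B i ω hocc
  have hfacts := HMH.hat_facts q r hY0 hY1 hhat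
  obtain ⟨_, _, _, _, hc5, hc6, _, _⟩ := hfacts
  rw [zpow_natCast] at hc5 hc6
  have h2p : (0:ℝ) < 2^p := by positivity
  have h2k : (0:ℝ) < (2:ℝ)^k := by positivity
  refine Set.mem_biUnion hs ?_
  simp only [Set.mem_preimage, Set.mem_Ico]
  have hc0 : (1 + (j:ℝ)/2^r)/2^k ≤ bucketMin h p B i ω := by
    rw [div_le_iff₀ h2k]; exact hc5
  have hc1 : bucketMin h p B i ω < (1 + ((j:ℝ)+1)/2^r)/2^k := by
    rw [lt_div_iff₀ h2k]; exact hc6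
  constructor
  · rw [div_le_iff₀ h2p]; linarith
  · rw [lt_div_iff₀ h2p]; linarith

lemma HMH.measurableSet_Fset {ι Ω : Type*} (h : ι → Ω → ℝ) (p q r : ℕ) (A : Finset ι)
    (i : ℕ) (k : ℕ) (j : ℤ) (M : MeasurableSpace Ω)
    (hm : ∀ s ∈ A, Measurable[M] (h s)) :
    MeasurableSet[M] (FsetHMH h p q r A i k j) := by
  classical
  have h2p : (0:ℝ) < 2^p := by positivity
  have hrep : FsetHMH h p q r A i k j =
      ⋃ s ∈ A, (((h s) ⁻¹' (Set.Ioo ((i:ℝ)/2^p) (((i:ℝ)+1)/2^p))) ∩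
        ((h s) ⁻¹' ((fun x : ℝ => x * 2^p - (i:ℝ)) ⁻¹' (hatHMH q r ⁻¹' {(((k:ℕ):ℤ), j)}))) ∩
        (⋂ s' ∈ A, (((h s') ⁻¹' (Set.Ioo ((i:ℝ)/2^p) (((i:ℝ)+1)/2^p)))ᶜ ∪
          {ω | h s ω ≤ h s' ω}))) := by
    ext ω
    simp only [FsetHMH, Set.mem_setOf_eq, Set.mem_iUnion, Set.mem_inter_iff, Set.mem_preimage,
      Set.mem_Ioo, Set.mem_iInter, Set.mem_union, Set.mem_compl_iff, Set.mem_singleton_iff]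
    constructor
    · rintro ⟨hocc, hhat⟩
      obtain ⟨s, hs, hc, heq, hmin⟩ := HMH.bucketMin_attained h p A i ω hocc
      refine ⟨s, hs, ⟨⟨hc, by rw [← heq]; exact hhat⟩, ?_⟩⟩
      intro s' hs'
      by_cases hcs' : (i:ℝ)/2^p < h s' ω ∧ h s' ω < ((i:ℝ)+1)/2^p
      · right
        have h1 := hmin s' hs' hcs'
        rw [heq] at h1
        nlinarith
      · left; exact hcs'
    · rintro ⟨s, hs, ⟨⟨hc, hcell⟩, hall⟩⟩
      have hocc : bucketOccupied h p A i ω := ⟨s, hs, hc⟩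
      refine ⟨hocc, ?_⟩
      obtain ⟨s₀, hs₀, hc₀, heq₀, hmin₀⟩ := HMH.bucketMin_attained h p A i ω hocc
      have h1 : bucketMin h p A i ω ≤ h s ω * 2^p - i := hmin₀ s hs hc
      have h2 : h s ω ≤ h s₀ ω := by
        rcases hall s₀ hs₀ with h' | h'
        · exact absurd hc₀ h'
        · exact h'
      have h3 : h s ω * 2^p - i ≤ bucketMin h p A i ω := by
        rw [heq₀]; nlinarith
      have : bucketMin h p A i ω = h s ω * 2^p - i := le_antisymm h1 h3
      rw [this]; exact hcell
  rw [hrep]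
  apply MeasurableSet.biUnion A.countable_toSet
  intro s hs
  apply MeasurableSet.inter
  · apply MeasurableSet.inter
    · exact hm s hs measurableSet_Ioo
    · apply hm s hs
      exact ((HMH.measurable_hat q r).comp ((measurable_id.mul_const _).sub_const _))
        (measurableSet_singleton _)
  · apply MeasurableSet.biInter A.countable_toSet
    intro s' hs'
    apply MeasurableSet.union
    · exact (hm s' hs' measurableSet_Ioo).compl
    · exact measurableSet_le (hm s hs) (hm s' hs')

lemma HMH.Fset_subset_iUnion {ι Ω : Type*} (h : ι → Ω → ℝ) (p q r : ℕ) (A : Finset ι)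
    (i : ℕ) (k : ℕ) (j : ℤ) (hk : 1 ≤ k) (hkq : k < 2^q) :
    FsetHMH h p q r A i k j ⊆
      ⋃ s ∈ A, (h s) ⁻¹' (Set.Ioc (((i:ℝ)*2^k+1)/(2^p*2^k)) (((i:ℝ)*2^k+2)/(2^p*2^k))) := by
  rintro ω ⟨hocc, hhat⟩
  obtain ⟨hY0, hY1⟩ := HMH.bucketMin_mem_Ioo h p A i ω hocc
  obtain ⟨s, hs, hc, heq, _⟩ := HMH.bucketMin_attained h p A i ω hocc
  have hfacts := HMH.hat_facts q r hY0 hY1 hhat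
  obtain ⟨_, _, _, _, _, _, hup, hlow⟩ := hfacts
  have hlow' := hlow (by exact_mod_cast hkq)
  rw [zpow_natCast] at hup hlow'
  have h2p : (0:ℝ) < 2^p := by positivity
  have h2k : (0:ℝ) < (2:ℝ)^k := by positivity
  refine Set.mem_biUnion hs ?_
  simp only [Set.mem_preimage, Set.mem_Ioc]
  rw [heq] at hup hlow'
  constructor
  · rw [div_lt_iff₀ (by positivity)]
    nlinarith
  · rw [le_div_iff₀ (by positivity)]
    nlinarith

lemma HMH.Fset_subset_iInter {ι Ω : Type*} (h : ι → Ω → ℝ) (p q r : ℕ) (A : Finset ι)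
    (i : ℕ) (k : ℕ) (j : ℤ) (hk : 1 ≤ k) (hkq : k < 2^q) :
    FsetHMH h p q r A i k j ⊆
      ⋂ s ∈ A, ((h s) ⁻¹' (Set.Ioc ((i:ℝ)/2^p) (((i:ℝ)*2^k+1)/(2^p*2^k))))ᶜ := by
  rintro ω ⟨hocc, hhat⟩
  obtain ⟨hY0, hY1⟩ := HMH.bucketMin_mem_Ioo h p A i ω hocc
  obtain ⟨s₀, hs₀, hc₀, heq₀, hmin₀⟩ := HMH.bucketMin_attained h p A i ω hocc
  have hfacts := HMH.hat_facts q r hY0 hY1 hhat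
  obtain ⟨_, _, _, _, _, _, _, hlow⟩ := hfacts
  have hlow' := hlow (by exact_mod_cast hkq)
  rw [zpow_natCast] at hlow'
  have h2p : (0:ℝ) < 2^p := by positivity
  have h2k : (0:ℝ) < (2:ℝ)^k := by positivity
  have h2k1 : (1:ℝ) < (2:ℝ)^k := by
    calc (1:ℝ) < 2 := one_lt_two
    _ ≤ (2:ℝ)^k := by
      calc (2:ℝ) = 2^1 := (pow_one 2).symm
      _ ≤ 2^k := pow_le_pow_right₀ one_le_two hk
  simp only [Set.mem_iInter, Set.mem_compl_iff, Set.mem_preimage, Set.mem_Ioc]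
  intro s hs hmem
  obtain ⟨hm1, hm2⟩ := hmem
  -- s is in the bucket
  have hcs : (i:ℝ)/2^p < h s ω ∧ h s ω < ((i:ℝ)+1)/2^p := by
    refine ⟨hm1, ?_⟩
    calc h s ω ≤ ((i:ℝ)*2^k+1)/(2^p*2^k) := hm2
    _ < ((i:ℝ)+1)/2^p := by
      rw [div_lt_div_iff₀ (by positivity) h2p]
      nlinarith
  have h1 := hmin₀ s hs hcs
  have h2 : h s ω * 2^p - i ≤ 1/(2:ℝ)^k := by
    rw [le_div_iff₀ h2k]
    have := (le_div_iff₀ (by positivity : (0:ℝ) < 2^p*2^k)).mp hm2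
    nlinarith
  have h3 : bucketMin h p A i ω * 2^k ≤ 1 := by
    calc bucketMin h p A i ω * 2^k ≤ (h s ω * 2^p - i) * 2^k :=
      mul_le_mul_of_nonneg_right h1 h2k.le
    _ ≤ (1/(2:ℝ)^k) * 2^k := mul_le_mul_of_nonneg_right h2 h2k.le
    _ = 1 := by field_simp
  linarith

lemma HMH.final_sum (p q r n m : ℕ) (P : ℕ → ℝ)
    (hP0 : ∀ k, 0 ≤ P k) (hP1 : ∀ k, P k ≤ 1)
    (hP2 : ∀ k, 1 ≤ k → k < 2^q → P k ≤ n * (1/(2^p*(2:ℝ)^k)))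
    (hP3 : ∀ k, 1 ≤ k → k < 2^q → P k ≤ (1 - 1/(2^p*(2:ℝ)^k))^n)
    (hmn : m ≤ n) :
    ∑ k ∈ Finset.Icc 1 (2^q), P k * (m * ((1/(2^p*(2:ℝ)^k))/2^r))
      ≤ 5/2^r + (n:ℝ)/2^(p+2^q+r) := by
  have h2q1 : 1 ≤ 2^q := Nat.one_le_two_pow
  have h2r : (0:ℝ) < (2:ℝ)^r := by positivity
  have h2p : (0:ℝ) < (2:ℝ)^p := by positivity
  have hmn' : (m:ℝ) ≤ (n:ℝ) := by exact_mod_cast hmn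
  have heps : ∀ k : ℕ, (0:ℝ) < 1/(2^p*(2:ℝ)^k) := by
    intro k; positivity
  have hsplit := Finset.sum_Icc_succ_top (a := 1) (b := 2^q - 1) (by omega)
    (fun k => P k * (m * ((1/(2^p*(2:ℝ)^k))/2^r)))
  rw [show 2^q - 1 + 1 = 2^q from by omega] at hsplit
  rw [hsplit]
  -- bound the top term
  have htop : P (2^q) * (m * ((1/(2^p*(2:ℝ)^(2^q)))/2^r)) ≤ (n:ℝ)/2^(p+2^q+r) := by
    have hpow : (2:ℝ)^(p+2^q+r) = 2^p*(2:ℝ)^(2^q)*2^r := by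
      rw [pow_add, pow_add]
    have h1 : P (2^q) * (m * ((1/(2^p*(2:ℝ)^(2^q)))/2^r))
        ≤ 1 * (n * ((1/(2^p*(2:ℝ)^(2^q)))/2^r)) := by
      apply mul_le_mul (hP1 _) _ _ zero_le_one
      · apply mul_le_mul_of_nonneg_right hmn' (le_of_lt (by positivity))
      · positivity
    refine h1.trans (le_of_eq ?_)
    rw [hpow]
    field_simp
  -- bound the main sum
  have hmainsum : ∑ k ∈ Finset.Icc 1 (2^q - 1), P k * (m * ((1/(2^p*(2:ℝ)^k))/2^r))
      ≤ 5/2^r := by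
    have hterm : ∀ k ∈ Finset.Icc 1 (2^q - 1),
        P k * (m * ((1/(2^p*(2:ℝ)^k))/2^r)) ≤ psiHMH (((n:ℝ)/2^p)/2^k) * (1/2^r) := by
      intro k hk
      rw [Finset.mem_Icc] at hk
      have hk1 : 1 ≤ k := hk.1
      have hk2 : k < 2^q := by omega
      have h2k : (0:ℝ) < (2:ℝ)^k := by positivity
      have hx : ((n:ℝ)/2^p)/2^k = (n:ℝ) * (1/(2^p*(2:ℝ)^k)) := by
        field_simp
      have heps1 : 1/(2^p*(2:ℝ)^k) ≤ 1 := by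
        rw [div_le_one (by positivity)]
        have e1 : (1:ℝ) ≤ (2:ℝ)^p := one_le_pow₀ one_le_two
        have e2 : (1:ℝ) ≤ (2:ℝ)^k := one_le_pow₀ one_le_two
        nlinarith
      have hPmin : P k ≤ min (((n:ℝ)/2^p)/2^k) (4/(((((n:ℝ)/2^p)/2^k)+2)^2)) := by
        apply le_min
        · rw [hx]; exact hP2 k hk1 hk2
        · refine (hP3 k hk1 hk2).trans ?_
          have := HMH.one_sub_pow_le n (1/(2^p*(2:ℝ)^k)) (heps k).le heps1
          rw [← hx] at this
          exact this
      have hfac : (m:ℝ) * ((1/(2^p*(2:ℝ)^k))/2^r) ≤ (((n:ℝ)/2^p)/2^k) * (1/2^r) := by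
        rw [hx]
        calc (m:ℝ) * ((1/(2^p*(2:ℝ)^k))/2^r) ≤ (n:ℝ) * ((1/(2^p*(2:ℝ)^k))/2^r) := by
              apply mul_le_mul_of_nonneg_right hmn' (by positivity)
        _ = (n:ℝ) * (1/(2^p*(2:ℝ)^k)) * (1/2^r) := by ring
      calc P k * ((m:ℝ) * ((1/(2^p*(2:ℝ)^k))/2^r))
          ≤ (min (((n:ℝ)/2^p)/2^k) (4/(((((n:ℝ)/2^p)/2^k)+2)^2)))
            * ((((n:ℝ)/2^p)/2^k) * (1/2^r)) := by
            apply mul_le_mul hPmin hfac (by positivity) (le_trans (hP0 k) hPmin)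
        _ = psiHMH (((n:ℝ)/2^p)/2^k) * (1/2^r) := by rw [psiHMH]; ring
    refine le_trans (Finset.sum_le_sum hterm) ?_
    rw [← Finset.sum_mul]
    have hre : ∑ k ∈ Finset.Icc 1 (2^q - 1), psiHMH (((n:ℝ)/2^p)/2^k)
        = ∑ k ∈ Finset.range (2^q - 1), psiHMH (((n:ℝ)/2^p)/2^(k+1)) := by
      rw [← Finset.Ico_add_one_right_eq_Icc, Finset.sum_Ico_eq_sum_range]
      simp [add_comm]
    rw [hre]
    have hsum := (HMH.psiSum (2^q - 1) ((n:ℝ)/2^p) (by positivity)).trans (min_le_right _ _)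
    have h164 : 16/((n:ℝ)/2^p+4) ≥ 0 := by positivity
    have : ∑ k ∈ Finset.range (2^q - 1), psiHMH (((n:ℝ)/2^p)/2^(k+1)) ≤ 5 := by linarith
    calc (∑ k ∈ Finset.range (2^q - 1), psiHMH (((n:ℝ)/2^p)/2^(k+1))) * (1/2^r)
        ≤ 5 * (1/2^r) := by
          apply mul_le_mul_of_nonneg_right this (by positivity)
      _ = 5/2^r := by ring
  linarith

/-- **Per-bucket collision bound for the full HyperMinHash sketch**
(key step of Theorem `thm:main`): for disjoint sets `A`, `B` with
`|A| = n ≥ 1`, `|B| = m ≥ 1`, `m ≤ n ≤ 2^{2^q + r}`, and independent uniform-`[0,1]`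
hashes on `A ∪ B`, the probability that bucket `i` is occupied for both sets and the
HyperMinHash bucket values coincide is at most `5/2^r + n/2^{p + 2^q + r}`. -/
theorem hyperminhash_bucket_collision_bound
    {Ω ι : Type*} [MeasurableSpace Ω] [DecidableEq ι]
    (μ : Measure Ω) [IsProbabilityMeasure μ]
    (p q r : ℕ) (n m : ℕ)
    (A B : Finset ι) (hdisj : Disjoint A B)
    (hcardA : A.card = n) (hcardB : B.card = m)
    (hm : 1 ≤ m) (hmn : m ≤ n) (hnb : n ≤ 2 ^ (2 ^ q + r))
    (h : ι → Ω → ℝ)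
    (hmeas : ∀ s ∈ A ∪ B, Measurable (h s))
    (hindep : iIndepFun (fun s : ↥(A ∪ B) => h s) μ)
    (hunif : ∀ s ∈ A ∪ B, Measure.map (h s) μ = volume.restrict (Set.Icc (0 : ℝ) 1)) :
    ∀ i < 2 ^ p,
      (μ {ω | bucketOccupied h p A i ω ∧ bucketOccupied h p B i ω
        ∧ hatHMH q r (bucketMin h p A i ω) = hatHMH q r (bucketMin h p B i ω)}).toReal
      ≤ 5 / 2 ^ r + (n : ℝ) / 2 ^ (p + 2 ^ q + r) := by
  intro i hi
  classical
  have h2p : (0:ℝ) < 2^p := by positivity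
  have h2r : (0:ℝ) < (2:ℝ)^r := by positivity
  -- σ-algebras generated by the hashes of A and of B, and their independence
  have hle : ∀ t : ↥(A ∪ B), MeasurableSpace.comap (h ↑t) inferInstance ≤ ‹MeasurableSpace Ω› :=
    fun t => (hmeas ↑t t.2).comap_le
  have hdisj' : Disjoint {t : ↥(A ∪ B) | ↑t ∈ A} {t : ↥(A ∪ B) | ↑t ∈ B} := by
    rw [Set.disjoint_left]
    intro t htA htB
    exact (Finset.disjoint_left.mp hdisj htA) htB
  have hIndepAB : Indep
      (⨆ t ∈ {t : ↥(A ∪ B) | ↑t ∈ A}, MeasurableSpace.comap (h ↑t) inferInstance)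
      (⨆ t ∈ {t : ↥(A ∪ B) | ↑t ∈ B}, MeasurableSpace.comap (h ↑t) inferInstance) μ :=
    indep_iSup_of_disjoint hle hindep.iIndep hdisj'
  have hmeasMA : ∀ s ∈ A,
      Measurable[⨆ t ∈ {t : ↥(A ∪ B) | ↑t ∈ A}, MeasurableSpace.comap (h ↑t) inferInstance]
        (h s) := by
    intro s hs
    rw [measurable_iff_comap_le]
    exact le_iSup₂ (f := fun (t : ↥(A ∪ B)) (_ : ↑t ∈ A) =>
      MeasurableSpace.comap (h ↑t) inferInstance)
      (⟨s, Finset.mem_union_left B hs⟩ : ↥(A ∪ B)) hs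
  have hmeasMB : ∀ s ∈ B,
      Measurable[⨆ t ∈ {t : ↥(A ∪ B) | ↑t ∈ B}, MeasurableSpace.comap (h ↑t) inferInstance]
        (h s) := by
    intro s hs
    rw [measurable_iff_comap_le]
    exact le_iSup₂ (f := fun (t : ↥(A ∪ B)) (_ : ↑t ∈ B) =>
      MeasurableSpace.comap (h ↑t) inferInstance)
      (⟨s, Finset.mem_union_right A hs⟩ : ↥(A ∪ B)) hs
  have hMAle : (⨆ t ∈ {t : ↥(A ∪ B) | ↑t ∈ A}, MeasurableSpace.comap (h ↑t) inferInstance)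
      ≤ ‹MeasurableSpace Ω› := iSup₂_le fun t _ => hle t
  -- measurability of the events
  have hFmeasMA : ∀ (k : ℕ) (j : ℤ),
      MeasurableSet[⨆ t ∈ {t : ↥(A ∪ B) | ↑t ∈ A},
        MeasurableSpace.comap (h ↑t) inferInstance] (FsetHMH h p q r A i k j) :=
    fun k j => HMH.measurableSet_Fset h p q r A i k j _ hmeasMA
  have hFmeas : ∀ (k : ℕ) (j : ℤ), MeasurableSet (FsetHMH h p q r A i k j) :=
    fun k j => hMAle _ (hFmeasMA k j)
  have hGmeasMB : ∀ (k : ℕ) (j : ℤ),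
      MeasurableSet[⨆ t ∈ {t : ↥(A ∪ B) | ↑t ∈ B},
        MeasurableSpace.comap (h ↑t) inferInstance] (GsetHMH h p r B i k j) := by
    intro k j
    apply MeasurableSet.biUnion B.countable_toSet
    intro s hs
    exact hmeasMB s hs measurableSet_Ico
  -- independence per cell
  have hFG : ∀ (k : ℕ) (j : ℤ),
      μ (FsetHMH h p q r A i k j ∩ GsetHMH h p r B i k j)
        = μ (FsetHMH h p q r A i k j) * μ (GsetHMH h p r B i k j) :=
    fun k j => (Indep_iff _ _ μ).mp hIndepAB _ _ (hFmeasMA k j) (hGmeasMB k j)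
  -- event inclusion
  have hEsub : {ω | bucketOccupied h p A i ω ∧ bucketOccupied h p B i ω
      ∧ hatHMH q r (bucketMin h p A i ω) = hatHMH q r (bucketMin h p B i ω)} ⊆
      ⋃ k ∈ Finset.Icc 1 (2^q), ⋃ j ∈ Finset.Icc (-(2^r:ℤ)) (2^r),
        (FsetHMH h p q r A i k j ∩ GsetHMH h p r B i k j) := by
    rintro ω ⟨hoccA, hoccB, heq⟩
    obtain ⟨hX0, hX1⟩ := HMH.bucketMin_mem_Ioo h p A i ω hoccA
    have hkj : hatHMH q r (bucketMin h p A i ω) =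
        ((hatHMH q r (bucketMin h p A i ω)).1, (hatHMH q r (bucketMin h p A i ω)).2) := rfl
    obtain ⟨hk1, hk2, hj1, hj2, _⟩ := HMH.hat_facts q r hX0 hX1 hkj
    set k₀ : ℤ := (hatHMH q r (bucketMin h p A i ω)).1 with hk₀
    set j₀ : ℤ := (hatHMH q r (bucketMin h p A i ω)).2 with hj₀
    have hkq : ((2:ℤ)^q) = ((2^q : ℕ) : ℤ) := by push_cast; ring
    have hknat : ((k₀.toNat : ℕ):ℤ) = k₀ := Int.toNat_of_nonneg (by omega)
    have hmemK : k₀.toNat ∈ Finset.Icc 1 (2^q) := by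
      rw [Finset.mem_Icc]
      rw [hkq] at hk2
      omega
    have hmemJ : j₀ ∈ Finset.Icc (-(2^r:ℤ)) (2^r) := by
      rw [Finset.mem_Icc]; exact ⟨hj1, hj2⟩
    refine Set.mem_biUnion hmemK (Set.mem_biUnion hmemJ ⟨⟨hoccA, by rw [hkj, hknat]⟩, ?_⟩)
    exact HMH.mem_Gset h p q r B i _ j₀ ω hoccB (by rw [← heq, hkj, hknat])
    -- uniform measure computations
  have hIcoB : ∀ s ∈ B, ∀ a b : ℝ, μ ((h s) ⁻¹' Set.Ico a b) ≤ ENNReal.ofReal (b - a) := by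
    intro s hs a b
    have hms := hmeas s (Finset.mem_union_right A hs)
    rw [← Measure.map_apply hms measurableSet_Ico, hunif s (Finset.mem_union_right A hs),
      Measure.restrict_apply measurableSet_Ico]
    exact le_trans (measure_mono Set.inter_subset_left) (le_of_eq Real.volume_Ico)
  have hIocA : ∀ s ∈ A, ∀ a b : ℝ, μ ((h s) ⁻¹' Set.Ioc a b) ≤ ENNReal.ofReal (b - a) := by
    intro s hs a b
    have hms := hmeas s (Finset.mem_union_left B hs)
    rw [← Measure.map_apply hms measurableSet_Ioc, hunif s (Finset.mem_union_left B hs),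
      Measure.restrict_apply measurableSet_Ioc]
    exact le_trans (measure_mono Set.inter_subset_left) (le_of_eq Real.volume_Ioc)
  -- the G bound
  have hG_bound : ∀ (k : ℕ) (j : ℤ),
      (μ (GsetHMH h p r B i k j)).toReal ≤ m * ((1/(2^p*(2:ℝ)^k))/2^r) := by
    intro k j
    have h2k : (0:ℝ) < (2:ℝ)^k := by positivity
    have hlen : ((i:ℝ) + (1 + ((j:ℝ)+1)/2^r)/2^k)/2^p - ((i:ℝ) + (1 + (j:ℝ)/2^r)/2^k)/2^p
        = (1/(2^p*(2:ℝ)^k))/2^r := by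
      have e2p : ((2:ℝ)^p) ≠ 0 := by positivity
      have e2k : ((2:ℝ)^k) ≠ 0 := by positivity
      have e2r : ((2:ℝ)^r) ≠ 0 := by positivity
      field_simp
      ring
    have h1 : μ (GsetHMH h p r B i k j) ≤ (m : ENNReal) * ENNReal.ofReal ((1/(2^p*(2:ℝ)^k))/2^r) := by
      refine le_trans (measure_biUnion_finset_le B _) ?_
      have h2 : ∀ s ∈ B, μ ((h s) ⁻¹' (Set.Ico (((i:ℝ) + (1 + (j:ℝ)/2^r)/2^k)/2^p)
          (((i:ℝ) + (1 + ((j:ℝ)+1)/2^r)/2^k)/2^p))) ≤ ENNReal.ofReal ((1/(2^p*(2:ℝ)^k))/2^r) := by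
        intro s hs
        refine le_trans (hIcoB s hs _ _) (le_of_eq ?_)
        rw [hlen]
      refine le_trans (Finset.sum_le_sum h2) ?_
      rw [Finset.sum_const, hcardB, nsmul_eq_mul]
    calc (μ (GsetHMH h p r B i k j)).toReal
        ≤ ((m : ENNReal) * ENNReal.ofReal ((1/(2^p*(2:ℝ)^k))/2^r)).toReal := by
          apply ENNReal.toReal_mono _ h1
          exact ENNReal.mul_ne_top (ENNReal.natCast_ne_top m) ENNReal.ofReal_ne_top
      _ = m * ((1/(2^p*(2:ℝ)^k))/2^r) := by
          rw [ENNReal.toReal_mul, ENNReal.toReal_natCast, ENNReal.toReal_ofReal (by positivity)]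
  -- sum over j of F equals the union
  have hsum_PF : ∀ k : ℕ, ∑ j ∈ Finset.Icc (-(2^r:ℤ)) (2^r), (μ (FsetHMH h p q r A i k j)).toReal
      = (μ (⋃ j ∈ Finset.Icc (-(2^r:ℤ)) (2^r), FsetHMH h p q r A i k j)).toReal := by
    intro k
    have hdisjF : (↑(Finset.Icc (-(2^r:ℤ)) (2^r)) : Set ℤ).PairwiseDisjoint
        (fun j => FsetHMH h p q r A i k j) := by
      intro j _ j' _ hne
      simp only [Function.onFun]
      rw [Set.disjoint_left]
      rintro ω ⟨_, e1⟩ ⟨_, e2⟩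
      rw [e1] at e2
      exact hne ((Prod.ext_iff.mp e2).2)
    rw [measure_biUnion_finset hdisjF (fun j _ => hFmeas k j),
      ENNReal.toReal_sum (fun j _ => measure_ne_top μ _)]
    -- bounds on the union over j
  have hPU1 : ∀ k : ℕ,
      (μ (⋃ j ∈ Finset.Icc (-(2^r:ℤ)) (2^r), FsetHMH h p q r A i k j)).toReal ≤ 1 := by
    intro k
    rw [← ENNReal.toReal_one]
    exact ENNReal.toReal_mono ENNReal.one_ne_top prob_le_one
  have hPU2 : ∀ k : ℕ, 1 ≤ k → k < 2^q →
      (μ (⋃ j ∈ Finset.Icc (-(2^r:ℤ)) (2^r), FsetHMH h p q r A i k j)).toReal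
        ≤ n * (1/(2^p*(2:ℝ)^k)) := by
    intro k hk1 hk2
    have h2k : (0:ℝ) < (2:ℝ)^k := by positivity
    have hsub : (⋃ j ∈ Finset.Icc (-(2^r:ℤ)) (2^r), FsetHMH h p q r A i k j) ⊆
        ⋃ s ∈ A, (h s) ⁻¹' (Set.Ioc (((i:ℝ)*2^k+1)/(2^p*2^k)) (((i:ℝ)*2^k+2)/(2^p*2^k))) :=
      Set.iUnion₂_subset fun j _ => HMH.Fset_subset_iUnion h p q r A i k j hk1 hk2
    have h1 : μ (⋃ j ∈ Finset.Icc (-(2^r:ℤ)) (2^r), FsetHMH h p q r A i k j)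
        ≤ (n : ENNReal) * ENNReal.ofReal (1/(2^p*(2:ℝ)^k)) := by
      refine le_trans (measure_mono hsub) (le_trans (measure_biUnion_finset_le A _) ?_)
      have h2 : ∀ s ∈ A, μ ((h s) ⁻¹' (Set.Ioc (((i:ℝ)*2^k+1)/(2^p*2^k))
          (((i:ℝ)*2^k+2)/(2^p*2^k)))) ≤ ENNReal.ofReal (1/(2^p*(2:ℝ)^k)) := by
        intro s hs
        refine le_trans (hIocA s hs _ _) (le_of_eq ?_)
        congr 1
        field_simp
        norm_num
      refine le_trans (Finset.sum_le_sum h2) ?_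
      rw [Finset.sum_const, hcardA, nsmul_eq_mul]
    calc (μ (⋃ j ∈ Finset.Icc (-(2^r:ℤ)) (2^r), FsetHMH h p q r A i k j)).toReal
        ≤ ((n : ENNReal) * ENNReal.ofReal (1/(2^p*(2:ℝ)^k))).toReal := by
          apply ENNReal.toReal_mono _ h1
          exact ENNReal.mul_ne_top (ENNReal.natCast_ne_top n) ENNReal.ofReal_ne_top
      _ = n * (1/(2^p*(2:ℝ)^k)) := by
          rw [ENNReal.toReal_mul, ENNReal.toReal_natCast, ENNReal.toReal_ofReal (by positivity)]
  have hPU3 : ∀ k : ℕ, 1 ≤ k → k < 2^q →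
      (μ (⋃ j ∈ Finset.Icc (-(2^r:ℤ)) (2^r), FsetHMH h p q r A i k j)).toReal
        ≤ (1 - 1/(2^p*(2:ℝ)^k))^n := by
    intro k hk1 hk2
    have h2k : (0:ℝ) < (2:ℝ)^k := by positivity
    have h2k1 : (1:ℝ) ≤ (2:ℝ)^k := one_le_pow₀ one_le_two
    have heps1 : 1/(2^p*(2:ℝ)^k) ≤ 1 := by
      rw [div_le_one (by positivity)]
      calc (1:ℝ) ≤ 2^p := by
            calc (1:ℝ) = 1*1 := by ring
            _ ≤ 2^p := by
              have : (1:ℝ) ≤ (2:ℝ)^p := one_le_pow₀ one_le_two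
              nlinarith
      _ ≤ 2^p*2^k := by nlinarith
    have heps0 : (0:ℝ) ≤ 1/(2^p*(2:ℝ)^k) := by positivity
    have hsub : (⋃ j ∈ Finset.Icc (-(2^r:ℤ)) (2^r), FsetHMH h p q r A i k j) ⊆
        ⋂ s ∈ A, ((h s) ⁻¹' (Set.Ioc ((i:ℝ)/2^p) (((i:ℝ)*2^k+1)/(2^p*2^k))))ᶜ :=
      Set.iUnion₂_subset fun j _ => HMH.Fset_subset_iInter h p q r A i k j hk1 hk2
    -- rewrite the intersection over the attached subtype
    have hiInter : (⋂ s ∈ A, ((h s) ⁻¹' (Set.Ioc ((i:ℝ)/2^p) (((i:ℝ)*2^k+1)/(2^p*2^k))))ᶜ)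
        = ⋂ t ∈ (A ∪ B).attach.filter (fun t => ↑t ∈ A),
            ((h ↑t) ⁻¹' (Set.Ioc ((i:ℝ)/2^p) (((i:ℝ)*2^k+1)/(2^p*2^k))))ᶜ := by
      ext ω
      simp only [Set.mem_iInter, Finset.mem_filter, Finset.mem_attach, true_and]
      constructor
      · rintro hall t ht
        exact hall ↑t ht
      · intro hall s hs
        exact hall ⟨s, Finset.mem_union_left B hs⟩ hs
    -- the single-hash probability
    have hfac : ∀ t : ↥(A ∪ B),
        μ (((h ↑t) ⁻¹' (Set.Ioc ((i:ℝ)/2^p) (((i:ℝ)*2^k+1)/(2^p*2^k))))ᶜ)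
          = ENNReal.ofReal (1 - 1/(2^p*(2:ℝ)^k)) := by
      intro t
      have hms := hmeas ↑t t.2
      have hIoc : μ ((h ↑t) ⁻¹' (Set.Ioc ((i:ℝ)/2^p) (((i:ℝ)*2^k+1)/(2^p*2^k))))
          = ENNReal.ofReal (1/(2^p*(2:ℝ)^k)) := by
        rw [← Measure.map_apply hms measurableSet_Ioc, hunif ↑t t.2,
          Measure.restrict_apply measurableSet_Ioc]
        have hss : Set.Ioc ((i:ℝ)/2^p) (((i:ℝ)*2^k+1)/(2^p*2^k)) ∩ Set.Icc 0 1
            = Set.Ioc ((i:ℝ)/2^p) (((i:ℝ)*2^k+1)/(2^p*2^k)) := by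
          rw [Set.inter_eq_left]
          intro x hx
          obtain ⟨hx1, hx2⟩ := hx
          constructor
          · have : (0:ℝ) ≤ (i:ℝ)/2^p := by positivity
            linarith
          · have hup : ((i:ℝ)*2^k+1)/(2^p*2^k) ≤ 1 := by
              rw [div_le_one (by positivity)]
              have hi' : (i:ℝ) + 1 ≤ 2^p := by
                have : ((i:ℕ):ℝ) + 1 ≤ ((2^p : ℕ):ℝ) := by exact_mod_cast hi
                push_cast at this ⊢
                linarith
              nlinarith
            linarith
        rw [hss, Real.volume_Ioc]
        congr 1
        field_simp
        ring
      have hcompl : μ ((((h ↑t) ⁻¹' (Set.Ioc ((i:ℝ)/2^p) (((i:ℝ)*2^k+1)/(2^p*2^k)))))ᶜ)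
          = 1 - μ ((h ↑t) ⁻¹' (Set.Ioc ((i:ℝ)/2^p) (((i:ℝ)*2^k+1)/(2^p*2^k)))) :=
        prob_compl_eq_one_sub (hms measurableSet_Ioc)
      rw [hcompl, hIoc, ← ENNReal.ofReal_one, ← ENNReal.ofReal_sub _ heps0]
    -- the product over A
    have hprod : μ (⋂ t ∈ (A ∪ B).attach.filter (fun t => ↑t ∈ A),
        ((h ↑t) ⁻¹' (Set.Ioc ((i:ℝ)/2^p) (((i:ℝ)*2^k+1)/(2^p*2^k))))ᶜ)
        = ENNReal.ofReal ((1 - 1/(2^p*(2:ℝ)^k))^n) := by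
      rw [hindep.meas_biInter (S := (A ∪ B).attach.filter (fun t => ↑t ∈ A))
        (s := fun t => ((h ↑t) ⁻¹' (Set.Ioc ((i:ℝ)/2^p) (((i:ℝ)*2^k+1)/(2^p*2^k))))ᶜ)
        (fun t _ => ⟨(Set.Ioc ((i:ℝ)/2^p) (((i:ℝ)*2^k+1)/(2^p*2^k)))ᶜ,
          measurableSet_Ioc.compl, rfl⟩)]
      have hcard : ((A ∪ B).attach.filter (fun t => ↑t ∈ A)).card = n := by
        have himg : ((A ∪ B).attach.filter (fun t => ↑t ∈ A)).image Subtype.val = A := by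
          ext x
          simp only [Finset.mem_image, Finset.mem_filter, Finset.mem_attach, true_and]
          constructor
          · rintro ⟨t, ht, rfl⟩; exact ht
          · intro hx; exact ⟨⟨x, Finset.mem_union_left B hx⟩, hx, rfl⟩
        have h1 := Finset.card_image_of_injective
          ((A ∪ B).attach.filter (fun t => ↑t ∈ A)) Subtype.val_injective
        rw [himg, hcardA] at h1
        exact h1.symm
      calc ∏ t ∈ (A ∪ B).attach.filter (fun t => ↑t ∈ A),
            μ (((h ↑t) ⁻¹' (Set.Ioc ((i:ℝ)/2^p) (((i:ℝ)*2^k+1)/(2^p*2^k))))ᶜ)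
          = ∏ t ∈ (A ∪ B).attach.filter (fun t => ↑t ∈ A),
            ENNReal.ofReal (1 - 1/(2^p*(2:ℝ)^k)) := Finset.prod_congr rfl (fun t _ => hfac t)
        _ = ENNReal.ofReal (1 - 1/(2^p*(2:ℝ)^k)) ^ n := by rw [Finset.prod_const, hcard]
        _ = ENNReal.ofReal ((1 - 1/(2^p*(2:ℝ)^k))^n) := (ENNReal.ofReal_pow (by linarith) n).symm
    calc (μ (⋃ j ∈ Finset.Icc (-(2^r:ℤ)) (2^r), FsetHMH h p q r A i k j)).toReal
        ≤ (ENNReal.ofReal ((1 - 1/(2^p*(2:ℝ)^k))^n)).toReal := by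
          apply ENNReal.toReal_mono ENNReal.ofReal_ne_top
          rw [← hprod, ← hiInter]
          exact measure_mono hsub
      _ = (1 - 1/(2^p*(2:ℝ)^k))^n := ENNReal.toReal_ofReal (pow_nonneg (by linarith) n)
    -- final assembly
  have hstep0 : μ {ω | bucketOccupied h p A i ω ∧ bucketOccupied h p B i ω
      ∧ hatHMH q r (bucketMin h p A i ω) = hatHMH q r (bucketMin h p B i ω)}
      ≤ ∑ k ∈ Finset.Icc 1 (2^q), ∑ j ∈ Finset.Icc (-(2^r:ℤ)) (2^r),
        μ (FsetHMH h p q r A i k j ∩ GsetHMH h p r B i k j) :=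
    le_trans (measure_mono hEsub) (le_trans (measure_biUnion_finset_le _ _)
      (Finset.sum_le_sum fun k _ => measure_biUnion_finset_le _ _))
  have hsum_ne : (∑ k ∈ Finset.Icc 1 (2^q), ∑ j ∈ Finset.Icc (-(2^r:ℤ)) (2^r),
      μ (FsetHMH h p q r A i k j ∩ GsetHMH h p r B i k j)) ≠ ⊤ :=
    ENNReal.sum_ne_top.mpr fun k _ => ENNReal.sum_ne_top.mpr fun j _ => measure_ne_top μ _
  have hstep1 : ∀ k ∈ Finset.Icc 1 (2^q),
      ∑ j ∈ Finset.Icc (-(2^r:ℤ)) (2^r),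
        (μ (FsetHMH h p q r A i k j ∩ GsetHMH h p r B i k j)).toReal
      ≤ (μ (⋃ j ∈ Finset.Icc (-(2^r:ℤ)) (2^r), FsetHMH h p q r A i k j)).toReal
          * (m * ((1/(2^p*(2:ℝ)^k))/2^r)) := by
    intro k _
    have e1 : ∀ j ∈ Finset.Icc (-(2^r:ℤ)) (2^r),
        (μ (FsetHMH h p q r A i k j ∩ GsetHMH h p r B i k j)).toReal
          ≤ (μ (FsetHMH h p q r A i k j)).toReal * (m * ((1/(2^p*(2:ℝ)^k))/2^r)) := by
      intro j _
      rw [hFG k j, ENNReal.toReal_mul]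
      exact mul_le_mul_of_nonneg_left (hG_bound k j) ENNReal.toReal_nonneg
    refine le_trans (Finset.sum_le_sum e1) (le_of_eq ?_)
    rw [← Finset.sum_mul, hsum_PF k]
  calc (μ {ω | bucketOccupied h p A i ω ∧ bucketOccupied h p B i ω
      ∧ hatHMH q r (bucketMin h p A i ω) = hatHMH q r (bucketMin h p B i ω)}).toReal
      ≤ (∑ k ∈ Finset.Icc 1 (2^q), ∑ j ∈ Finset.Icc (-(2^r:ℤ)) (2^r),
          μ (FsetHMH h p q r A i k j ∩ GsetHMH h p r B i k j)).toReal :=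
        ENNReal.toReal_mono hsum_ne hstep0
    _ = ∑ k ∈ Finset.Icc 1 (2^q), ∑ j ∈ Finset.Icc (-(2^r:ℤ)) (2^r),
          (μ (FsetHMH h p q r A i k j ∩ GsetHMH h p r B i k j)).toReal := by
        rw [ENNReal.toReal_sum (fun k _ => ENNReal.sum_ne_top.mpr fun j _ => measure_ne_top μ _)]
        exact Finset.sum_congr rfl fun k _ =>
          ENNReal.toReal_sum (fun j _ => measure_ne_top μ _)
    _ ≤ ∑ k ∈ Finset.Icc 1 (2^q),
          (μ (⋃ j ∈ Finset.Icc (-(2^r:ℤ)) (2^r), FsetHMH h p q r A i k j)).toReal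
            * (m * ((1/(2^p*(2:ℝ)^k))/2^r)) := Finset.sum_le_sum hstep1
    _ ≤ 5/2^r + (n:ℝ)/2^(p+2^q+r) :=
        HMH.final_sum p q r n m
          (fun k => (μ (⋃ j ∈ Finset.Icc (-(2^r:ℤ)) (2^r), FsetHMH h p q r A i k j)).toReal)
          (fun k => ENNReal.toReal_nonneg) hPU1 hPU2 hPU3 hmn
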